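/- Let (α_n) and (β_n) be complex sequences with α_0 = 1 and α_1 = 0, and suppose that for every n ≥ 0, (2+b)·α_{n+2} = Σ_{j=0}^{n} β_j·(4α_{n−j} + 2a·α_{n−j+1} + b·α_{n−j+2}), where a,b ∈ ℂ with b ≠ −2. Then the formal power series M(z) = Σ α_n z^n and m(z) = Σ β_n z^n satisfy M(z)·(2+b − (4z² + 2az + b)·m(z)) = 2+b − (2az + b)·m(z) in ℂ[[z]]. -/

import Mathlib

open PowerSeries

/-- the moment recursion implies the formal power series identity
`M(z)·(2+b − (4z²+2az+b)·m(z)) = 2+b − (2az+b)·m(z)`. -/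
theorem stmt_1 (a b : ℂ) (hb : b ≠ -2) (α β : ℕ → ℂ)
    (hα0 : α 0 = 1) (hα1 : α 1 = 0)
    (hrec : ∀ n : ℕ, (2 + b) * α (n + 2) =
      ∑ j ∈ Finset.range (n + 1),
        β j * (4 * α (n - j) + 2 * a * α (n - j + 1) + b * α (n - j + 2))) :
    (PowerSeries.mk α) *
        (C (2 + b) - (4 * X ^ 2 + 2 * C a * X + C b) * PowerSeries.mk β)
      = C (2 + b) - (2 * C a * X + C b) * PowerSeries.mk β := by
  set M : PowerSeries ℂ := PowerSeries.mk α with hM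
  set m : PowerSeries ℂ := PowerSeries.mk β with hm
  set N : PowerSeries ℂ := PowerSeries.mk (fun k => α (k + 2)) with hN
  set M₁ : PowerSeries ℂ := PowerSeries.mk (fun k => α (k + 1)) with hM₁
  have hXN : X * N = M₁ := by
    ext k
    cases k with
    | zero => simp [hN, hM₁, hα1]
    | succ k => simp [PowerSeries.coeff_succ_X_mul, hN, hM₁]
  have hXM₁ : X * M₁ = M - 1 := by
    ext k
    cases k with
    | zero => simp [hM, hM₁, hα0]
    | succ k => simp [PowerSeries.coeff_succ_X_mul, hM, hM₁]
  have hFcoeff : ∀ k : ℕ, (PowerSeries.coeff k) (4 * M + 2 * C a * M₁ + C b * N)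
      = 4 * α k + 2 * a * α (k + 1) + b * α (k + 2) := by
    intro k
    rw [show (4 : PowerSeries ℂ) = C 4 from (map_ofNat (C) 4).symm,
      show (2 : PowerSeries ℂ) = C 2 from (map_ofNat (C) 2).symm]
    simp [hM, hM₁, hN, mul_assoc]
  have key : C (2 + b) * N = m * (4 * M + 2 * C a * M₁ + C b * N) := by
    ext n
    rw [PowerSeries.coeff_C_mul, PowerSeries.coeff_mul,
      Finset.Nat.sum_antidiagonal_eq_sum_range_succ_mk]
    simp only [hFcoeff]
    simp only [hN, PowerSeries.coeff_mk, hm]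
    exact hrec n
  linear_combination X ^ 2 * key + (C b * m - C (2 + b)) * X * hXN
    + (C b * m - C (2 + b) + 2 * C a * X * m) * hXM₁
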